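/- Let (X,+) be a commutative group, (Y,+) a group, and (S,+) a subsemigroup of (X,+) that generates X as a group. If g : S → Y is a semigroup homomorphism (g(s+t) = g(s) + g(t) for all s,t ∈ S), then there exists a unique group homomorphism f : X → Y such that f restricted to S equals g. -/

import Mathlib

private lemma aux_sub_add_sub {Y : Type*} [AddGroup Y] (p q r s : Y)
    (c1 : AddCommute q r) (c2 : AddCommute r s) :
    p + q - (r + s) = (p - r) + (q - s) := by
  have h2 : (-s) + (-r) = (-r) + (-s) := (c2.neg_left.neg_right).symm.eq
  calc p + q - (r + s) = p + q + (-s + -r) := by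
        rw [sub_eq_add_neg, neg_add_rev]
    _ = p + (q + -r) + -s := by rw [h2, ← add_assoc (p + q), add_assoc p q (-r)]
    _ = p + (-r + q) + -s := by rw [c1.neg_right.eq]
    _ = (p - r) + (q - s) := by
        rw [sub_eq_add_neg, sub_eq_add_neg, ← add_assoc p, add_assoc (p + -r)]

/-- If `S` is a subsemigroup of a commutative group `X` generating `X`, and
`g` is additive on `S` with values in a group `Y`, then `g` extends uniquely
to a group homomorphism `f : X →+ Y`. -/
theorem exists_unique_hom_extension_of_subsemigroup
    {X : Type*} [AddCommGroup X] {Y : Type*} [AddGroup Y]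
    (S : Set X) (hadd : ∀ a ∈ S, ∀ b ∈ S, a + b ∈ S)
    (hgen : AddSubgroup.closure S = ⊤)
    (g : X → Y) (hg : ∀ a ∈ S, ∀ b ∈ S, g (a + b) = g a + g b) :
    ∃! f : X →+ Y, ∀ s ∈ S, f s = g s := by
  classical
  by_cases hS : S.Nonempty
  · obtain ⟨s₀, hs₀⟩ := hS
    -- images of g on S pairwise commute
    have comm : ∀ a ∈ S, ∀ b ∈ S, AddCommute (g a) (g b) := by
      intro a ha b hb
      show g a + g b = g b + g a
      rw [← hg a ha b hb, ← hg b hb a ha, add_comm a b]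
    -- well-definedness of the difference representation
    have key : ∀ a ∈ S, ∀ b ∈ S, ∀ c ∈ S, ∀ d ∈ S,
        a - b = c - d → g a - g b = g c - g d := by
      intro a ha b hb c hc d hd h
      have h' : a + d = c + b := sub_eq_sub_iff_add_eq_add.mp h
      have hg1 : g a + g d = g c + g b := by
        rw [← hg a ha d hd, ← hg c hc b hb, h']
      have cbd : AddCommute (g b) (g d) := comm b hb d hd
      have hga : g a = g c + g b - g d := by
        rw [← hg1]; rw [add_sub_cancel_right]
      rw [hga]
      calc g c + g b - g d - g b = g c + (g b + -g d) + -g b := by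
            rw [sub_eq_add_neg, sub_eq_add_neg, add_assoc (g c)]
        _ = g c + (-g d + g b) + -g b := by rw [cbd.neg_right.eq]
        _ = g c + -g d + (g b + -g b) := by
            rw [← add_assoc (g c), add_assoc (g c + -g d)]
        _ = g c - g d := by rw [add_neg_cancel, add_zero, sub_eq_add_neg]
    -- every element of X is a difference of two elements of S
    have hex : ∀ x : X, ∃ a b, a ∈ S ∧ b ∈ S ∧ x = a - b := by
      intro x
      let T : AddSubgroup X :=
        { carrier := {x | ∃ a b, a ∈ S ∧ b ∈ S ∧ x = a - b}
          zero_mem' := ⟨s₀, s₀, hs₀, hs₀, by simp⟩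
          add_mem' := by
            rintro u v ⟨a, b, ha, hb, rfl⟩ ⟨c, d, hc, hd, rfl⟩
            exact ⟨a + c, b + d, hadd a ha c hc, hadd b hb d hd, by abel⟩
          neg_mem' := by
            rintro u ⟨a, b, ha, hb, rfl⟩
            exact ⟨b, a, hb, ha, by abel⟩ }
      have hST : S ⊆ T := by
        intro a ha
        exact ⟨a + s₀, s₀, hadd a ha s₀ hs₀, hs₀, by abel⟩
      have hle : AddSubgroup.closure S ≤ T := (AddSubgroup.closure_le T).mpr hST
      exact hle (by rw [hgen]; trivial)
    choose A B hA hB hAB using hex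
    set f0 : X → Y := fun x => g (A x) - g (B x) with hf0def
    have hf0 : ∀ (x : X), ∀ a ∈ S, ∀ b ∈ S, x = a - b → f0 x = g a - g b := by
      intro x a ha b hb h
      exact key (A x) (hA x) (B x) (hB x) a ha b hb (by rw [← hAB x, h])
    have hadd' : ∀ x y, f0 (x + y) = f0 x + f0 y := by
      intro x y
      have h1 : f0 (x + y) = g (A x + A y) - g (B x + B y) := by
        refine hf0 _ _ (hadd _ (hA x) _ (hA y)) _ (hadd _ (hB x) _ (hB y)) ?_
        conv_lhs => rw [hAB x, hAB y]
        abel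
      rw [h1, hg _ (hA x) _ (hA y), hg _ (hB x) _ (hB y)]
      exact aux_sub_add_sub _ _ _ _ (comm _ (hA y) _ (hB x)) (comm _ (hB x) _ (hB y))
    set F : X →+ Y := AddMonoidHom.mk' f0 hadd' with hFdef
    have hFS : ∀ s ∈ S, F s = g s := by
      intro s hs
      have h1 : f0 s = g (s + s₀) - g s₀ :=
        hf0 s (s + s₀) (hadd s hs s₀ hs₀) s₀ hs₀ (by abel)
      show f0 s = g s
      rw [h1, hg s hs s₀ hs₀, add_sub_cancel_right]
    refine ⟨F, hFS, ?_⟩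
    intro f' hf'
    ext x
    have hx : x ∈ AddSubgroup.closure S := by rw [hgen]; trivial
    induction hx using AddSubgroup.closure_induction with
    | mem s hs => rw [hf' s hs, hFS s hs]
    | zero => rw [map_zero, map_zero]
    | add u v hu hv ihu ihv => rw [map_add, map_add, ihu, ihv]
    | neg u hu ihu => rw [map_neg, map_neg, ihu]
  · -- S empty: X trivial
    rw [Set.not_nonempty_iff_eq_empty] at hS
    subst hS
    have hx0 : ∀ x : X, x = 0 := by
      intro x
      have hx : x ∈ AddSubgroup.closure (∅ : Set X) := by rw [hgen]; trivial
      rwa [AddSubgroup.closure_empty, AddSubgroup.mem_bot] at hx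
    refine ⟨0, by simp, ?_⟩
    intro f' _
    ext x
    rw [hx0 x]; simp
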